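/- Let W : ℝ → ℝ be C² with |W''| ≤ L everywhere. Let Ω be a measure space with finite measure and u^{n+1}, u^n, u^{n−1} ∈ L²(Ω) ∩ L^∞(Ω). Then −⟨2W'(u^n) − W'(u^{n−1}), u^{n+1} − u^n⟩ ≤ −∫_Ω W(u^{n+1}) + ∫_Ω W(u^n) + (L/2)(‖u^n − u^{n−1}‖²_{L²} + 2‖u^{n+1} − u^n‖²_{L²}), where ⟨·,·⟩ is the L² inner product. -/

import Mathlib

open MeasureTheory

/-- Quadratic Taylor bound from a Lipschitz estimate on the derivative. -/
lemma quad_taylor_bound {f : ℝ → ℝ} {L : ℝ} (hf : Differentiable ℝ f)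
    (hlip : ∀ x y : ℝ, |deriv f x - deriv f y| ≤ L * |x - y|) (a b : ℝ) :
    f a - f b - deriv f b * (a - b) ≤ L / 2 * (a - b) ^ 2 := by
  set h : ℝ := a - b with hh
  set φ : ℝ → ℝ := fun t => f (b + t * h) - (deriv f b * h) * t - (L / 2 * h ^ 2) * t ^ 2 with hφdef
  have hu : ∀ t : ℝ, HasDerivAt (fun t : ℝ => b + t * h) h t := by
    intro t
    simpa using ((hasDerivAt_id t).mul_const h).const_add b
  have hφ' : ∀ t : ℝ, HasDerivAt φ
      (deriv f (b + t * h) * h - deriv f b * h - L * h ^ 2 * t) t := by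
    intro t
    have hcomp : HasDerivAt (fun t : ℝ => f (b + t * h)) (deriv f (b + t * h) * h) t :=
      (hf (b + t * h)).hasDerivAt.comp t (hu t)
    have h2 : HasDerivAt (fun t : ℝ => (deriv f b * h) * t) (deriv f b * h) t := by
      simpa using (hasDerivAt_id t).const_mul (deriv f b * h)
    have h3 : HasDerivAt (fun t : ℝ => (L / 2 * h ^ 2) * t ^ 2)
        ((L / 2 * h ^ 2) * (2 * t)) t := by
      simpa using (hasDerivAt_pow 2 t).const_mul (L / 2 * h ^ 2)
    have := (hcomp.sub h2).sub h3
    refine this.congr_deriv ?_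
    ring
  have hφdiff : Differentiable ℝ φ := fun t => (hφ' t).differentiableAt
  have mono : AntitoneOn φ (Set.Icc (0:ℝ) 1) := by
    apply antitoneOn_of_deriv_nonpos (convex_Icc 0 1) hφdiff.continuous.continuousOn
      (fun t _ => (hφdiff t).differentiableWithinAt)
    intro t ht
    rw [interior_Icc] at ht
    rw [(hφ' t).deriv]
    have habs : |b + t * h - b| = t * |h| := by
      rw [add_sub_cancel_left, abs_mul, abs_of_pos ht.1]
    have hl := hlip (b + t * h) b
    rw [habs] at hl
    have hd : (deriv f (b + t * h) - deriv f b) * h ≤ L * (t * |h|) * |h| := by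
      calc (deriv f (b + t * h) - deriv f b) * h
          ≤ |(deriv f (b + t * h) - deriv f b) * h| := le_abs_self _
        _ = |deriv f (b + t * h) - deriv f b| * |h| := abs_mul _ _
        _ ≤ L * (t * |h|) * |h| := mul_le_mul_of_nonneg_right hl (abs_nonneg _)
    have hsq : |h| * |h| = h ^ 2 := by rw [← abs_mul, abs_mul_self, sq]
    have he : L * (t * |h|) * |h| = L * h ^ 2 * t := by rw [← hsq]; ring
    rw [he] at hd
    linarith
  have hkey : φ 1 ≤ φ 0 := mono (Set.left_mem_Icc.2 zero_le_one)
    (Set.right_mem_Icc.2 zero_le_one) zero_le_one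
  have e1 : φ 1 = f a - deriv f b * h - L / 2 * h ^ 2 := by
    simp only [hφdef]
    have : b + 1 * h = a := by rw [hh]; ring
    rw [this]; ring
  have e0 : φ 0 = f b := by simp [hφdef]
  rw [e1, e0] at hkey
  rw [hh] at *
  linarith

/-- Pointwise estimate for the extrapolated nonlinear term. -/
lemma pointwise_nonlinear_est {W : ℝ → ℝ} {L : ℝ} (hW : Differentiable ℝ W)
    (hL0 : 0 ≤ L)
    (hlip : ∀ x y : ℝ, |deriv W x - deriv W y| ≤ L * |x - y|) (a b c : ℝ) :
    -((2 * deriv W b - deriv W c) * (a - b)) ≤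
      -W a + W b + L / 2 * ((b - c) ^ 2 + 2 * (a - b) ^ 2) := by
  have h1 : W a - W b - deriv W b * (a - b) ≤ L / 2 * (a - b) ^ 2 :=
    quad_taylor_bound hW hlip a b
  have h2 : -((deriv W b - deriv W c) * (a - b)) ≤ L / 2 * ((b - c) ^ 2 + (a - b) ^ 2) := by
    have hl := hlip b c
    have hd : -((deriv W b - deriv W c) * (a - b)) ≤ L * |b - c| * |a - b| := by
      calc -((deriv W b - deriv W c) * (a - b))
          ≤ |(deriv W b - deriv W c) * (a - b)| := neg_le_abs _
        _ = |deriv W b - deriv W c| * |a - b| := abs_mul _ _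
        _ ≤ L * |b - c| * |a - b| := mul_le_mul_of_nonneg_right hl (abs_nonneg _)
    have hsq1 : |b - c| * |b - c| = (b - c) ^ 2 := by rw [← abs_mul, abs_mul_self, sq]
    have hsq2 : |a - b| * |a - b| = (a - b) ^ 2 := by rw [← abs_mul, abs_mul_self, sq]
    nlinarith [sq_nonneg (|b - c| - |a - b|), hd]
  nlinarith [h1, h2]

/-- An a.e. bound from membership in `L^∞`. -/
lemma exists_ae_abs_bound {Ω : Type*} [MeasurableSpace Ω] {μ : Measure Ω} {f : Ω → ℝ}
    (hf : MemLp f ⊤ μ) : ∃ C : ℝ, 0 ≤ C ∧ ∀ᵐ x ∂μ, |f x| ≤ C := by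
  refine ⟨(eLpNormEssSup f μ).toReal, ENNReal.toReal_nonneg, ?_⟩
  have htop : eLpNormEssSup f μ < ⊤ := by
    have := hf.2; rwa [eLpNorm_exponent_top] at this
  filter_upwards [enorm_ae_le_eLpNormEssSup f μ] with x hx
  have := ENNReal.toReal_mono htop.ne hx
  simpa [Real.norm_eq_abs] using this

theorem integrated_nonlinear_estimate
    {Ω : Type*} [MeasurableSpace Ω] (μ : Measure Ω) [IsFiniteMeasure μ]
    (W : ℝ → ℝ) (L : ℝ)
    (hW : ContDiff ℝ 2 W)
    (hL : ∀ s : ℝ, |deriv (deriv W) s| ≤ L)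
    (unp1 un unm1 : Ω → ℝ)
    (h1 : MemLp unp1 2 μ) (h1' : MemLp unp1 ⊤ μ)
    (h2 : MemLp un 2 μ) (h2' : MemLp un ⊤ μ)
    (h3 : MemLp unm1 2 μ) (h3' : MemLp unm1 ⊤ μ) :
    -(∫ x, (2 * deriv W (un x) - deriv W (unm1 x)) * (unp1 x - un x) ∂μ) ≤
      -(∫ x, W (unp1 x) ∂μ) + (∫ x, W (un x) ∂μ) +
        (L / 2) * ((∫ x, (un x - unm1 x) ^ 2 ∂μ) +
          2 * (∫ x, (unp1 x - un x) ^ 2 ∂μ)) := by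
  have hL0 : 0 ≤ L := le_trans (abs_nonneg _) (hL 0)
  have hWdiff : Differentiable ℝ W := hW.differentiable (by norm_num)
  have hW'diff : Differentiable ℝ (deriv W) :=
    (hW.iterate_deriv' 1 1).differentiable (by simp)
  have hlip : ∀ x y : ℝ, |deriv W x - deriv W y| ≤ L * |x - y| := by
    intro x y
    have : LipschitzWith L.toNNReal (deriv W) := by
      apply lipschitzWith_of_nnnorm_deriv_le hW'diff
      intro z
      have := hL z
      simp only [← NNReal.coe_le_coe, coe_nnnorm, Real.norm_eq_abs, Real.coe_toNNReal _ hL0]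
      exact this
    have h := this.dist_le_mul x y
    rwa [Real.dist_eq, Real.dist_eq, Real.coe_toNNReal _ hL0] at h
  -- pointwise estimate
  have hpt : ∀ x : Ω,
      -((2 * deriv W (un x) - deriv W (unm1 x)) * (unp1 x - un x)) ≤
        -W (unp1 x) + W (un x) +
          L / 2 * ((un x - unm1 x) ^ 2 + 2 * (unp1 x - un x) ^ 2) := fun x =>
    pointwise_nonlinear_est hWdiff hL0 hlip (unp1 x) (un x) (unm1 x)
  -- measurability
  have m1 : AEStronglyMeasurable unp1 μ := h1.1
  have m2 : AEStronglyMeasurable un μ := h2.1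
  have m3 : AEStronglyMeasurable unm1 μ := h3.1
  have hWc : Continuous W := hW.continuous
  have hW'c : Continuous (deriv W) := hW.continuous_deriv one_le_two
  -- a.e. bounds
  obtain ⟨C1, hC10, hC1⟩ := exists_ae_abs_bound h1'
  obtain ⟨C2, hC20, hC2⟩ := exists_ae_abs_bound h2'
  obtain ⟨C3, hC30, hC3⟩ := exists_ae_abs_bound h3'
  set C : ℝ := max C1 (max C2 C3) with hC
  have hC0 : 0 ≤ C := le_trans hC10 (le_max_left _ _)
  -- bounds of W and deriv W on [-C, C]
  obtain ⟨M, hM⟩ := (isCompact_Icc (a := -C) (b := C)).exists_bound_of_continuousOn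
    hWc.continuousOn
  obtain ⟨M', hM'⟩ := (isCompact_Icc (a := -C) (b := C)).exists_bound_of_continuousOn
    hW'c.continuousOn
  have hMmem : ∀ y : ℝ, |y| ≤ C → |W y| ≤ M := by
    intro y hy
    have : y ∈ Set.Icc (-C) C := abs_le.1 hy
    simpa [Real.norm_eq_abs] using hM y this
  have hM'mem : ∀ y : ℝ, |y| ≤ C → |deriv W y| ≤ M' := by
    intro y hy
    have : y ∈ Set.Icc (-C) C := abs_le.1 hy
    simpa [Real.norm_eq_abs] using hM' y this
  have hM0 : 0 ≤ M := le_trans (abs_nonneg _) (hMmem 0 (by simpa using hC0))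
  have hM'0 : 0 ≤ M' := le_trans (abs_nonneg _) (hM'mem 0 (by simpa using hC0))
  -- integrability
  have hbnd : ∀ᵐ x ∂μ, |unp1 x| ≤ C ∧ |un x| ≤ C ∧ |unm1 x| ≤ C := by
    filter_upwards [hC1, hC2, hC3] with x hx1 hx2 hx3
    exact ⟨le_trans hx1 (le_max_left _ _),
      le_trans hx2 (le_trans (le_max_left _ _) (le_max_right _ _)),
      le_trans hx3 (le_trans (le_max_right _ _) (le_max_right _ _))⟩
  have if1 : Integrable (fun x => (2 * deriv W (un x) - deriv W (unm1 x)) * (unp1 x - un x)) μ := by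
    have meas : AEStronglyMeasurable
        (fun x => (2 * deriv W (un x) - deriv W (unm1 x)) * (unp1 x - un x)) μ :=
      (((hW'c.comp_aestronglyMeasurable m2).const_mul 2).sub
        (hW'c.comp_aestronglyMeasurable m3)).mul (m1.sub m2)
    refine (memLp_top_of_bound meas ((2 * M' + M') * (C + C)) ?_).integrable le_top
    filter_upwards [hbnd] with x ⟨hx1, hx2, hx3⟩
    rw [Real.norm_eq_abs, abs_mul]
    have e1 : |2 * deriv W (un x) - deriv W (unm1 x)| ≤ 2 * M' + M' := by
      calc |2 * deriv W (un x) - deriv W (unm1 x)|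
          ≤ |2 * deriv W (un x)| + |deriv W (unm1 x)| := abs_sub _ _
        _ ≤ 2 * M' + M' := by
            rw [abs_mul, abs_two]
            have ha := hM'mem _ hx2
            have hb := hM'mem _ hx3
            linarith
    have e2 : |unp1 x - un x| ≤ C + C := le_trans (abs_sub _ _) (by gcongr)
    exact mul_le_mul e1 e2 (abs_nonneg _) (by positivity)
  have if2 : Integrable (fun x => W (unp1 x)) μ := by
    refine (memLp_top_of_bound (hWc.comp_aestronglyMeasurable m1) M ?_).integrable le_top
    filter_upwards [hbnd] with x ⟨hx1, _, _⟩
    simpa [Real.norm_eq_abs] using hMmem _ hx1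
  have if3 : Integrable (fun x => W (un x)) μ := by
    refine (memLp_top_of_bound (hWc.comp_aestronglyMeasurable m2) M ?_).integrable le_top
    filter_upwards [hbnd] with x ⟨_, hx2, _⟩
    simpa [Real.norm_eq_abs] using hMmem _ hx2
  have if4 : Integrable (fun x => (un x - unm1 x) ^ 2) μ := (h2.sub h3).integrable_sq
  have if5 : Integrable (fun x => (unp1 x - un x) ^ 2) μ := (h1.sub h2).integrable_sq
  -- integrate
  have hg : Integrable (fun x => -W (unp1 x) + W (un x) +
      L / 2 * ((un x - unm1 x) ^ 2 + 2 * (unp1 x - un x) ^ 2)) μ :=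
    (if2.neg.add if3).add ((if4.add (if5.const_mul 2)).const_mul (L / 2))
  have key : (∫ x, -((2 * deriv W (un x) - deriv W (unm1 x)) * (unp1 x - un x)) ∂μ) ≤
      ∫ x, (-W (unp1 x) + W (un x) +
        L / 2 * ((un x - unm1 x) ^ 2 + 2 * (unp1 x - un x) ^ 2)) ∂μ :=
    integral_mono if1.neg hg hpt
  rw [integral_neg] at key
  have ifneg : Integrable (fun x => -W (unp1 x)) μ := if2.neg
  have ifA : Integrable (fun x => -W (unp1 x) + W (un x)) μ := ifneg.add if3
  have if5' : Integrable (fun x => 2 * (unp1 x - un x) ^ 2) μ := if5.const_mul 2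
  have ifC : Integrable (fun x => (un x - unm1 x) ^ 2 + 2 * (unp1 x - un x) ^ 2) μ :=
    if4.add if5'
  rw [integral_add ifA (ifC.const_mul (L / 2)), integral_add ifneg if3, integral_neg,
    integral_const_mul, integral_add if4 if5', integral_const_mul] at key
  linarith
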